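/- Consider the HRC instance with one hospital h of capacity 2 with preference c1 ≻ c3 ≻ c4 ≻ c2, and two connected couples C1=(c1,c2) and C2=(c3,c4), each finding acceptable only the pair (h,h). Then both the matching assigning C1 to (h,h) and the matching assigning C2 to (h,h) are stable; hence stable matchings in HRC with type-b couples need not match the same set of doctors. -/

import Mathlib

namespace Stmt6

/-- Doctors: two connected couples `(c1,c2)` and `(c3,c4)`. -/
inductive Doc | c1 | c2 | c3 | c4
deriving DecidableEq

instance : Fintype Doc := ⟨{Doc.c1, Doc.c2, Doc.c3, Doc.c4}, fun x => by cases x <;> decide⟩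

open Doc

/-- The unique hospital `h` (capacity 2) has preference list c1 ≻ c3 ≻ c4 ≻ c2. -/
def rk : Doc → ℕ
  | c1 => 0
  | c3 => 1
  | c4 => 2
  | c2 => 3

/-- `M x = true` means doctor `x` is assigned to the unique hospital `h`. -/
def count (M : Doc → Bool) : ℕ := (Finset.univ.filter (fun x => M x = true)).card

/-- A connected couple `(x,y)` whose only acceptable pair is `(h,h)` blocks `M`:
the couple is unmatched and either `h` has two free posts, or one free post and a member
beats an assignee, or `h` is full and `x` beats an assignee `r` and `y` beats an
assignee distinct from `r`. -/
def coupleBlocks (x y : Doc) (M : Doc → Bool) : Prop :=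
  ¬ (M x = true ∧ M y = true) ∧
  (2 ≤ 2 - count M ∨
   (2 - count M = 1 ∧ ∃ r, M r = true ∧ (rk x < rk r ∨ rk y < rk r)) ∨
   (count M = 2 ∧ ∃ r s, M r = true ∧ M s = true ∧ r ≠ s ∧ rk x < rk r ∧ rk y < rk s))

/-- The matching assigning couple `(c1,c2)` to `(h,h)`. -/
def MA : Doc → Bool
  | c1 => true
  | c2 => true
  | _ => false

/-- The matching assigning couple `(c3,c4)` to `(h,h)`. -/
def MB : Doc → Bool
  | c3 => true
  | c4 => true
  | _ => false

/-- both matchings (assigning either couple to `(h,h)`) are stable, and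
they match different sets of doctors, so stable matchings in HRC with type-b couples
need not match the same set of doctors. -/
theorem stmt_6 :
    (¬ coupleBlocks c1 c2 MA ∧ ¬ coupleBlocks c3 c4 MA) ∧
    (¬ coupleBlocks c1 c2 MB ∧ ¬ coupleBlocks c3 c4 MB) ∧
    (∃ x, MA x ≠ MB x) := by
  refine ⟨⟨?_, ?_⟩, ⟨?_, ?_⟩, ⟨c1, by decide⟩⟩ <;>
  · rintro ⟨h1, h2 | ⟨h2, r, hr, hrk⟩ | ⟨h2, r, s, hr, hs, hrs, hrk1, hrk2⟩⟩
    · revert h2; decide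
    · revert h2; decide
    · revert hr hs hrs hrk1 hrk2; revert r s; decide
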